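/- Let A be symmetric positive definite, S_m ∈ ℝ^{d×m} full column rank, and Σ_m = A^{-1} - S_m (S_mᵀ A S_m)^{-1} S_mᵀ. Then the null space of Σ_m equals A · span(columns of S_m); in particular, for CG directions, the null space of Σ_m equals A K_m(A, r_0). -/

import Mathlib

open Matrix
open scoped Matrix

/-- The null space of the inverse-prior posterior covariance is
`A · span(columns of S_m)`; in particular, for CG directions (whose span is the
Krylov space), it equals `A K_m(A, r₀)`. -/
theorem inverse_prior_posterior_covariance_nullspace
    (d m : ℕ) (A : Matrix (Fin d) (Fin d) ℝ) (hA : A.PosDef)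
    (S : Matrix (Fin d) (Fin m) ℝ)
    (hS : LinearIndependent ℝ (fun j : Fin m => Sᵀ j))
    (r₀ : Fin d → ℝ)
    (hspan : Submodule.span ℝ (Set.range Sᵀ)
      = Submodule.span ℝ (Set.range fun i : Fin m => (A ^ (i : ℕ)).mulVec r₀)) :
    LinearMap.ker (A⁻¹ - S * (Sᵀ * A * S)⁻¹ * Sᵀ).mulVecLin
      = Submodule.map A.mulVecLin (Submodule.span ℝ (Set.range Sᵀ)) ∧
    LinearMap.ker (A⁻¹ - S * (Sᵀ * A * S)⁻¹ * Sᵀ).mulVecLin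
      = Submodule.map A.mulVecLin
          (Submodule.span ℝ (Set.range fun i : Fin m => (A ^ (i : ℕ)).mulVec r₀)) := by
  have hSinj : Function.Injective S.mulVec := Matrix.mulVec_injective_iff.mpr hS
  -- G := Sᵀ * A * S is a unit
  have h0 : ∀ c, (Sᵀ * A * S) *ᵥ c = 0 → c = 0 := by
    intro c h
    have hkey : c ⬝ᵥ ((Sᵀ * A * S) *ᵥ c) = (S *ᵥ c) ⬝ᵥ (A *ᵥ (S *ᵥ c)) := by
      calc c ⬝ᵥ ((Sᵀ * A * S) *ᵥ c)
          = c ⬝ᵥ (Sᵀ *ᵥ ((A * S) *ᵥ c)) := by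
            rw [Matrix.mulVec_mulVec, Matrix.mul_assoc]
        _ = (S *ᵥ c) ⬝ᵥ ((A * S) *ᵥ c) := by
            rw [Matrix.dotProduct_mulVec, Matrix.vecMul_transpose]
        _ = (S *ᵥ c) ⬝ᵥ (A *ᵥ (S *ᵥ c)) := by rw [Matrix.mulVec_mulVec]
    have hSc : S *ᵥ c = 0 := by
      by_contra hne
      have hpos := hA.dotProduct_mulVec_pos hne
      simp only [star_trivial, RCLike.re_to_real] at hpos
      rw [← hkey, h, dotProduct_zero] at hpos
      exact lt_irrefl 0 hpos
    exact hSinj (by simpa using hSc)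
  have hG : IsUnit (Sᵀ * A * S) := by
    rw [← Matrix.mulVec_injective_iff_isUnit]
    intro c₁ c₂ hc
    have : (Sᵀ * A * S) *ᵥ (c₁ - c₂) = 0 := by
      rw [Matrix.mulVec_sub, hc, sub_self]
    exact sub_eq_zero.mp (h0 _ this)
  have hAdet : IsUnit A.det := isUnit_iff_ne_zero.mpr hA.det_pos.ne'
  have hAinvA : A⁻¹ * A = 1 := Matrix.nonsing_inv_mul A hAdet
  have hAAinv : A * A⁻¹ = 1 := Matrix.mul_nonsing_inv A hAdet
  have hGinvG : (Sᵀ * A * S)⁻¹ * (Sᵀ * A * S) = 1 :=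
    Matrix.nonsing_inv_mul _ ((Matrix.isUnit_iff_isUnit_det _).mp hG)
  have key : LinearMap.ker (A⁻¹ - S * (Sᵀ * A * S)⁻¹ * Sᵀ).mulVecLin
      = Submodule.map A.mulVecLin (Submodule.span ℝ (Set.range Sᵀ)) := by
    rw [show Submodule.span ℝ (Set.range Sᵀ) = Submodule.span ℝ (Set.range S.col) from rfl,
      ← Matrix.range_mulVecLin, ← LinearMap.range_comp, ← Matrix.mulVecLin_mul]
    ext x
    simp only [LinearMap.mem_ker, LinearMap.mem_range, Matrix.mulVecLin_apply]
    constructor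
    · intro hx
      refine ⟨(Sᵀ * A * S)⁻¹ *ᵥ (Sᵀ *ᵥ x), ?_⟩
      have hx' : A⁻¹ *ᵥ x = (S * (Sᵀ * A * S)⁻¹ * Sᵀ) *ᵥ x := by
        rw [Matrix.sub_mulVec] at hx
        exact sub_eq_zero.mp hx
      calc (A * S) *ᵥ ((Sᵀ * A * S)⁻¹ *ᵥ (Sᵀ *ᵥ x))
          = A *ᵥ ((S * (Sᵀ * A * S)⁻¹ * Sᵀ) *ᵥ x) := by
            simp [Matrix.mul_assoc]
        _ = A *ᵥ (A⁻¹ *ᵥ x) := by rw [hx']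
        _ = x := by rw [Matrix.mulVec_mulVec, hAAinv, Matrix.one_mulVec]
    · rintro ⟨c, rfl⟩
      rw [Matrix.sub_mulVec, sub_eq_zero]
      calc A⁻¹ *ᵥ ((A * S) *ᵥ c) = (A⁻¹ * (A * S)) *ᵥ c := Matrix.mulVec_mulVec _ _ _
        _ = S *ᵥ c := by rw [← Matrix.mul_assoc, hAinvA, Matrix.one_mul]
        _ = (S * ((Sᵀ * A * S)⁻¹ * (Sᵀ * A * S))) *ᵥ c := by
            rw [hGinvG, Matrix.mul_one]
        _ = (S * (Sᵀ * A * S)⁻¹ * Sᵀ) *ᵥ ((A * S) *ᵥ c) := by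
            simp [Matrix.mul_assoc]
  exact ⟨key, by rw [key, hspan]⟩
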